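/- Every opaque history is last-use opaque: for every prefix-closed set 𝓔 of histories and every H ∈ 𝓔, if H is opaque, then H is last-use opaque with respect to 𝓔. -/

import Mathlib

/-!
Formal model of transactional memory (TM) histories, following Siek &
Wojciechowski, "Last-use Opacity: A Strong Safety Property for Transactional
Memory with Early Release Support".

Transactions and shared variables are indexed by natural numbers; values of
variables are natural numbers with initial value 0.
-/

namespace TM

open Classical

/-- Transactional operations: `init`, read of a variable, write of a value to
a variable, `tryCommit` and `tryAbort`. -/
inductive Op : Type
  | init : Op
  | read : ℕ → Op
  | write : ℕ → ℕ → Op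
  | tryCommit : Op
  | tryAbort : Op
  deriving DecidableEq

/-- Responses: `ok`, a value (for reads), commit `C_i`, abort `A_i`. -/
inductive Resp : Type
  | ok : Resp
  | value : ℕ → Resp
  | committed : Resp
  | aborted : Resp
  deriving DecidableEq

/-- Invocation and response events, tagged with the transaction executing them. -/
inductive Event : Type
  | inv : ℕ → Op → Event
  | res : ℕ → Resp → Event
  deriving DecidableEq

/-- The transaction executing an event. -/
def Event.txn : Event → ℕ
  | .inv t _ => t
  | .res t _ => t

/-- A history is a finite sequence of events. -/
abbrev History := List Event

/-- `proj i H` is `H|T_i`, the subsequence of events of transaction `i`. -/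
def proj (i : ℕ) (H : History) : History :=
  H.filter (fun e => e.txn == i)

/-- Transaction `i` is in `H` (`H|T_i ≠ ∅`). -/
def inTxn (H : History) (i : ℕ) : Prop := proj i H ≠ []

/-- `T_i` is committed in `H`: `H|T_i` contains `tryC_i → C_i`. -/
def committed (H : History) (i : ℕ) : Prop :=
  List.Sublist [Event.inv i Op.tryCommit, Event.res i Resp.committed] (proj i H)

/-- `T_i` is aborted in `H`: `H|T_i` contains a response `A_i`. -/
def aborted (H : History) (i : ℕ) : Prop :=
  Event.res i Resp.aborted ∈ proj i H

/-- `T_i` is commit-pending in `H`. -/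
def commitPending (H : History) (i : ℕ) : Prop :=
  Event.inv i Op.tryCommit ∈ proj i H ∧
    Event.res i Resp.committed ∉ proj i H ∧ Event.res i Resp.aborted ∉ proj i H

/-- `T_i` is live in `H`. -/
def live (H : History) (i : ℕ) : Prop :=
  inTxn H i ∧ ¬ committed H i ∧ ¬ aborted H i ∧ ¬ commitPending H i

/-- A complete operation execution by transaction `i` in `H`: the invocation
is at position `ki`, its matching response at position `kr` (no events of `i`
in between). -/
def opExec (H : History) (i ki kr : ℕ) (o : Op) (r : Resp) : Prop :=
  ki < kr ∧ H[ki]? = some (Event.inv i o) ∧ H[kr]? = some (Event.res i r) ∧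
    ∀ (m : ℕ) (e : Event), ki < m → m < kr → H[m]? = some e → e.txn ≠ i

def isInvEvent : Event → Prop
  | .inv _ _ => True
  | .res _ _ => False

def isResEvent : Event → Prop
  | .inv _ _ => False
  | .res _ _ => True

/-- Well-formedness of `H|T_i` (as the list `L`): alternation of invocations
and responses starting with `init_i`, no events after a commit/abort response,
and no invocation after an invocation of `tryC_i` or `tryA_i`. -/
def wellFormedTxn (L : History) (i : ℕ) : Prop :=
  (∀ (k : ℕ) (e : Event), L[k]? = some e →
      ((k % 2 = 0 → isInvEvent e) ∧ (k % 2 = 1 → isResEvent e))) ∧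
  (L ≠ [] → L[0]? = some (Event.inv i Op.init)) ∧
  (∀ k : ℕ, (L[k]? = some (Event.res i Resp.committed) ∨
      L[k]? = some (Event.res i Resp.aborted)) → L.length = k + 1) ∧
  (∀ (k : ℕ) (o : Op), L[k]? = some (Event.inv i o) → (o = Op.tryCommit ∨ o = Op.tryAbort) →
      ∀ (m : ℕ) (o' : Op), L[m]? = some (Event.inv i o') → m ≤ k)

/-- A well-formed history. -/
def wellFormed (H : History) : Prop :=
  ∀ i : ℕ, wellFormedTxn (proj i H) i

/-- Unique writes: distinct write executions write distinct values, all
different from the initial value 0. -/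
def uniqueWrites (H : History) : Prop :=
  ∀ (k1 k2 i1 i2 x1 x2 v1 v2 : ℕ),
    H[k1]? = some (Event.inv i1 (Op.write x1 v1)) →
    H[k2]? = some (Event.inv i2 (Op.write x2 v2)) →
    v1 ≠ 0 ∧ (k1 ≠ k2 → v1 ≠ v2)

/-- Two histories are equivalent if they agree on every `H|T_i`. -/
def equivH (H1 H2 : History) : Prop := ∀ i : ℕ, proj i H1 = proj i H2

/-- Real-time precedence: the last event of `H|T_i` precedes the first event
of `H|T_j` in `H`. -/
def rtPrec (H : History) (i j : ℕ) : Prop :=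
  ∃ k l : ℕ, k < l ∧
    (∃ e : Event, H[k]? = some e ∧ e.txn = i) ∧
    (∃ e : Event, H[l]? = some e ∧ e.txn = j) ∧
    (∀ (m : ℕ) (e : Event), H[m]? = some e → e.txn = i → m ≤ k) ∧
    (∀ (m : ℕ) (e : Event), H[m]? = some e → e.txn = j → l ≤ m)

/-- `S` preserves the real-time order of `H`. -/
def preservesRT (H S : History) : Prop := ∀ i j : ℕ, rtPrec H i j → rtPrec S i j

/-- A sequential history: any two distinct transactions are comparable in the
real-time order. -/
def sequential (S : History) : Prop :=
  ∀ i j : ℕ, inTxn S i → inTxn S j → i ≠ j → rtPrec S i j ∨ rtPrec S j i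

/-- The read of value `v` on variable `x` invoked at position `ki` is
consistent with the sequential specification of `x`: the latest write to `x`
completed before it writes `v`, or there is no such write and `v = 0`. -/
def readsLegally (S : History) (x v ki : ℕ) : Prop :=
  (∃ j kwi kwr : ℕ, kwr < ki ∧ opExec S j kwi kwr (Op.write x v) Resp.ok ∧
      ∀ j' v' kwi' kwr' : ℕ,
        opExec S j' kwi' kwr' (Op.write x v') Resp.ok → kwr' < ki → kwr' ≤ kwr)
  ∨ (v = 0 ∧ ∀ j v' kwi kwr : ℕ, opExec S j kwi kwr (Op.write x v') Resp.ok → ¬ kwr < ki)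

/-- A (sequential) history is legal if its restriction to every variable is in
the variable's sequential specification, i.e. every complete read is
consistent with the latest preceding write. -/
def isLegal (S : History) : Prop :=
  ∀ i x v ki kr : ℕ, opExec S i ki kr (Op.read x) (Resp.value v) → readsLegally S x v ki

/-- Transaction `i` has the pending (unanswered) invocation of `o` in `H`. -/
def pendingInv (H : History) (i : ℕ) (o : Op) : Prop :=
  (proj i H).getLast? = some (Event.inv i o)

/-- `C` is a completion `Compl(H)` of `H`. -/
def isCompletion (H C : History) : Prop :=
  H <+: C ∧
  (∀ i : ℕ, inTxn C i → inTxn H i) ∧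
  (∀ i : ℕ, inTxn C i → committed C i ∨ aborted C i) ∧
  ∀ i : ℕ, inTxn H i →
    ((committed H i ∨ aborted H i) → proj i C = proj i H) ∧
    (¬ committed H i → ¬ aborted H i →
      (pendingInv H i Op.tryCommit →
          proj i C = proj i H ++ [Event.res i Resp.committed]) ∧
      ((∃ o : Op, o ≠ Op.tryCommit ∧ pendingInv H i o) →
          proj i C = proj i H ++ [Event.res i Resp.aborted]) ∧
      ((¬ ∃ o : Op, pendingInv H i o) →
          proj i C = proj i H ++ [Event.inv i Op.tryCommit, Event.res i Resp.aborted]))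

/-- Restriction of a history to the events of a set of transactions. -/
noncomputable def restrictTxns (S : History) (T : Set ℕ) : History :=
  S.filter (fun e => decide (e.txn ∈ T))

/-- `Vis(S,T_i)`: the longest subhistory of `S` containing, for each `T_j` in
`S`, the events of `T_j` iff `j = i` or (`T_j` is committed and `T_j ≺_S T_i`). -/
noncomputable def Vis (S : History) (i : ℕ) : History :=
  restrictTxns S {j | j = i ∨ (committed S j ∧ rtPrec S j i)}

/-- `T_i` is legal in `S` if `Vis(S,T_i)` is legal. -/
def legalIn (S : History) (i : ℕ) : Prop := isLegal (Vis S i)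

/-- Serializability. -/
def serializable (H : History) : Prop :=
  ∃ C S : History, isCompletion H C ∧ sequential S ∧ equivH S C ∧
    ∀ i : ℕ, inTxn S i → committed S i → legalIn S i

/-- The read invoked at position `ki` by `T_j` on `x` is non-local: no write
to `x` by `T_j` precedes it. -/
def nonLocalReadAt (H : History) (j x ki : ℕ) : Prop :=
  ∀ m v : ℕ, m < ki → H[m]? ≠ some (Event.inv j (Op.write x v))

/-- `T_i` releases variable `x` early in `H`. -/
def releasesEarly (H : History) (i x : ℕ) : Prop :=
  ∃ P : History, P <+: H ∧ live P i ∧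
    ∃ j v wki wkr rki rkr : ℕ, j ≠ i ∧
      opExec P i wki wkr (Op.write x v) Resp.ok ∧
      opExec P j rki rkr (Op.read x) (Resp.value v) ∧
      nonLocalReadAt P j x rki ∧
      wkr < rki

/-- Overwriting by `T_i` observed by `T_j` on variable `x` in `H`. -/
def overwriting (H : History) (i j x : ℕ) : Prop :=
  i ≠ j ∧ releasesEarly H i x ∧
  ∃ v v' k1i k1r k2i k2r kri krr : ℕ,
    opExec H i k1i k1r (Op.write x v) Resp.ok ∧
    opExec H i k2i k2r (Op.write x v') Resp.ok ∧ k1r < k2i ∧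
    opExec H j kri krr (Op.read x) (Resp.value v) ∧ krr < k2i

/-- Final-state opacity. -/
def finalStateOpaque (H : History) : Prop :=
  ∃ C S : History, isCompletion H C ∧ sequential S ∧ equivH S C ∧ preservesRT H S ∧
    ∀ i : ℕ, inTxn S i → legalIn S i

/-- Opacity: every finite prefix is final-state opaque. -/
def isOpaque (H : History) : Prop := ∀ P : History, P <+: H → finalStateOpaque P

/-- Causal past of `T_i` in `H`: `T_i` together with the committed or aborted
transactions that precede `T_i` in `H`. -/
def causalPast (H : History) (i : ℕ) : Set ℕ :=
  {j | j = i ∨ ((committed H j ∨ aborted H j) ∧ rtPrec H j i)}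

/-- Virtual world consistency. -/
def VWC (H : History) : Prop :=
  (∃ S : History, sequential S ∧ equivH S (restrictTxns H {j | committed H j}) ∧
      preservesRT H S ∧ ∀ j : ℕ, inTxn S j → committed S j → legalIn S j) ∧
  (∀ i : ℕ, inTxn H i → aborted H i →
      ∃ S : History, sequential S ∧ equivH S (restrictTxns H (causalPast H i)) ∧ isLegal S)

/-! ### Live opacity -/

/-- Index `k` of `L` carries (part of) a read operation execution. -/
def isReadIdx (L : History) (k : ℕ) : Prop :=
  (∃ t x : ℕ, L[k]? = some (Event.inv t (Op.read x))) ∨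
  (1 ≤ k ∧ (∃ t x : ℕ, L[k-1]? = some (Event.inv t (Op.read x))) ∧
    ∃ (t : ℕ) (r : Resp), L[k]? = some (Event.res t r))

/-- Index `k` of `L` carries (part of) a non-local read operation execution. -/
def isNonLocalReadIdx (L : History) (k : ℕ) : Prop :=
  (∃ t x : ℕ, L[k]? = some (Event.inv t (Op.read x)) ∧
      ∀ m t' v : ℕ, m < k → L[m]? ≠ some (Event.inv t' (Op.write x v))) ∨
  (1 ≤ k ∧ (∃ (t : ℕ) (r : Resp), L[k]? = some (Event.res t r)) ∧
    ∃ t x : ℕ, L[k-1]? = some (Event.inv t (Op.read x)) ∧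
      ∀ m t' v : ℕ, m < k - 1 → L[m]? ≠ some (Event.inv t' (Op.write x v)))

/-- The subsequence of `L` of events at indices satisfying `p`. -/
noncomputable def seqOfIdx (L : History) (p : ℕ → Prop) : History :=
  ((List.range L.length).filter (fun k => decide (p k))).filterMap (fun k => L[k]?)

/-- `H|(T_i,r)`: the read operation executions of `T_i`, excluding the last
read if its response is `A_i`. -/
noncomputable def readSeq (H : History) (i : ℕ) : History :=
  let L := proj i H
  let R := seqOfIdx L (isReadIdx L)
  if R.getLast? = some (Event.res i Resp.aborted) then R.dropLast.dropLast else R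

/-- `H|(T_i,gr)`: the non-local read operation executions of `T_i`, excluding
the last read if its response is `A_i`. -/
noncomputable def grSeq (H : History) (i : ℕ) : History :=
  let L := proj i H
  let R := seqOfIdx L (isNonLocalReadIdx L)
  if R.getLast? = some (Event.res i Resp.aborted) then R.dropLast.dropLast else R

/-- The transaction `T_i^gr`. -/
noncomputable def grTxn (H : History) (i : ℕ) : History :=
  if grSeq H i = [] then []
  else [Event.inv i Op.init, Event.res i Resp.ok] ++ grSeq H i ++
       [Event.inv i Op.tryCommit, Event.res i Resp.committed]

/-- `S` justifies the serializability of `H`. -/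
def justifiesSer (S H : History) : Prop :=
  ∃ H' : History, List.Sublist H' H ∧ (∀ e ∈ H', committed H e.txn) ∧
    (∀ j : ℕ, committed H j → proj j H' = proj j H) ∧
    isLegal S ∧ equivH S H'

/-- All complete local reads of `T_i` in `H` have legal responses: the last
preceding write of `T_i` to the variable wrote the value read. -/
def localReadsLegal (H : History) (i : ℕ) : Prop :=
  ∀ x v ki kr : ℕ, opExec (proj i H) i ki kr (Op.read x) (Resp.value v) →
    (∃ m w : ℕ, m < ki ∧ (proj i H)[m]? = some (Event.inv i (Op.write x w))) →
    ∃ m : ℕ, m < ki ∧ (proj i H)[m]? = some (Event.inv i (Op.write x v)) ∧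
      ∀ m' w' : ℕ, m < m' → m' < ki → (proj i H)[m']? ≠ some (Event.inv i (Op.write x w'))

/-- Live opacity. -/
def liveOpaque (H : History) : Prop :=
  ∃ S : History, sequential S ∧ preservesRT H S ∧ justifiesSer S H ∧
    (∃ S' : History, sequential S' ∧ List.Sublist S S' ∧
      (∀ i : ℕ, inTxn H i → ¬ inTxn S i → proj i S' = grTxn H i) ∧
      (∀ i j : ℕ, rtPrec H i j → inTxn S' i → inTxn S' j → rtPrec S' i j) ∧
      isLegal S') ∧
    (∀ i : ℕ, inTxn H i → ¬ inTxn S i → localReadsLegal H i)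

/-! ### Last-use opacity -/

/-- A prefix-closed set of histories (the possible histories of a program). -/
def prefixClosed (E : Set History) : Prop :=
  ∀ H ∈ E, ∀ P : History, P <+: H → P ∈ E

/-- The write execution on `x` by `T_i` at positions `(ki,kr)` is the closing
("last") write on `x` by `T_i` in `H` with respect to the possible histories
`E`: in no extension of `H` in `E` does `T_i` invoke another write on `x`
after it. -/
def closingWrite (E : Set History) (H : History) (i x v ki kr : ℕ) : Prop :=
  opExec H i ki kr (Op.write x v) Resp.ok ∧
  ∀ H' ∈ E, H <+: H' → ∀ m v' : ℕ, H'[m]? = some (Event.inv i (Op.write x v')) → m ≤ ki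

/-- `T_i` decided on `x` in `H` (w.r.t. `E`). -/
def decidedOn (E : Set History) (H : History) (i x : ℕ) : Prop :=
  ∃ v ki kr : ℕ, closingWrite E H i x v ki kr

/-- The variable accessed by an operation. -/
def opVar : Op → Option ℕ
  | .read x => some x
  | .write x _ => some x
  | _ => none

/-- The variable accessed by the event at index `k` of `L` (for a response,
the variable of the matching invocation at `k-1`). -/
def eventVarAt (L : History) (k : ℕ) : Option ℕ :=
  match L[k]? with
  | some (Event.inv _ o) => opVar o
  | some (Event.res _ _) =>
      match L[k-1]? with
      | some (Event.inv _ o) => opVar o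
      | _ => none
  | none => none

/-- The operation execution starting at index `k` of `L` is complete. -/
def completeAt (L : History) (k : ℕ) : Prop :=
  ∀ (t : ℕ) (o : Op), L[k]? = some (Event.inv t o) →
    ∃ (t' : ℕ) (r : Resp), L[k+1]? = some (Event.res t' r)

/-- `Hs⌊T_i` (decided transaction subhistory): the subsequence of `Hs|T_i`
consisting of `init_i` and all complete operation executions on variables on
which `T_i` decided (decidedness judged in `Hd` w.r.t. `E`). -/
noncomputable def lastUseProj (E : Set History) (Hd Hs : History) (i : ℕ) : History :=
  let L := proj i Hs
  seqOfIdx L (fun k => completeAt L k ∧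
    (k ≤ 1 ∨ ∃ x : ℕ, eventVarAt L k = some x ∧ decidedOn E Hd i x))

/-- `Hs⌊^T_i = Hs⌊T_i · [tryC_i → C_i]`. -/
noncomputable def lastUseProjC (E : Set History) (Hd Hs : History) (i : ℕ) : History :=
  lastUseProj E Hd Hs i ++ [Event.inv i Op.tryCommit, Event.res i Resp.committed]

/-- Transactions of a history in order of first occurrence. -/
def txnOrder : History → List ℕ
  | [] => []
  | e :: t => e.txn :: (txnOrder t).filter (fun j => j ≠ e.txn)

/-- The candidate `LUVis(S,T_i)` determined by a choice `inc` of which decided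
non-committed transactions to include: for each transaction `j` of `S` in
order, all of `S|T_j` if `j = i` or `T_j` is committed in `S` and `T_j ≺_S T_i`;
`S⌊^T_j` if `T_j` is non-committed, decided on some variable in `H`,
`T_j ≺_S T_i`, not `T_j ≺_H T_i`, and `inc j` holds; nothing otherwise. -/
noncomputable def buildLUVis (E : Set History) (H S : History) (i : ℕ)
    (inc : ℕ → Prop) : History :=
  (txnOrder S).flatMap (fun j =>
    if j = i ∨ (committed S j ∧ rtPrec S j i) then proj j S
    else if ¬ committed S j ∧ (∃ x : ℕ, decidedOn E H j x) ∧ rtPrec S j i ∧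
        ¬ rtPrec H j i ∧ inc j
      then lastUseProjC E H S j
    else [])

/-- `T_i` is last-use legal in `S`: some admissible `LUVis(S,T_i)` is legal. -/
def lastUseLegal (E : Set History) (H S : History) (i : ℕ) : Prop :=
  ∃ inc : ℕ → Prop, isLegal (buildLUVis E H S i inc)

/-- Final-state last-use opacity with respect to `E`. -/
def finalStateLUOpaque (E : Set History) (H : History) : Prop :=
  ∃ C S : History, isCompletion H C ∧ sequential S ∧ equivH S C ∧ preservesRT H S ∧
    (∀ i : ℕ, inTxn S i → committed S i → legalIn S i) ∧
    (∀ i : ℕ, inTxn S i → ¬ committed S i → lastUseLegal E H S i)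

/-- Last-use opacity with respect to `E`: every finite prefix is final-state
last-use opaque with respect to `E`. -/
def lastUseOpaque (E : Set History) (H : History) : Prop :=
  ∀ P : History, P <+: H → finalStateLUOpaque E P

/-! ### Database conditions -/

/-- `T_j` reads from `T_i` in `H` (unique writes). -/
def readsFrom (H : History) (j i : ℕ) : Prop :=
  ∃ x v kwi kwr kri krr : ℕ,
    opExec H i kwi kwr (Op.write x v) Resp.ok ∧
    opExec H j kri krr (Op.read x) (Resp.value v)

/-- Recoverability: if `T_j` reads from `T_i` then `T_i` commits before `T_j`
commits. -/
def recoverable (H : History) : Prop :=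
  ∀ i j : ℕ, i ≠ j → readsFrom H j i →
    ∀ kc' : ℕ, H[kc']? = some (Event.res j Resp.committed) →
      ∃ kc : ℕ, kc < kc' ∧ H[kc]? = some (Event.res i Resp.committed)

/-- Avoiding cascading aborts: whenever `T_j` reads `x` from `T_i`, the commit
response `C_i` precedes the read. -/
def ACA (H : History) : Prop :=
  ∀ i j x v kwi kwr kri krr : ℕ, i ≠ j →
    opExec H i kwi kwr (Op.write x v) Resp.ok →
    opExec H j kri krr (Op.read x) (Resp.value v) →
    ∃ m : ℕ, m < kri ∧ H[m]? = some (Event.res i Resp.committed)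

/-- Strictness. -/
def strictH (H : History) : Prop :=
  ∀ i j : ℕ, i ≠ j → ∀ x v v' ki kr kwi kwr : ℕ,
    (opExec H i ki kr (Op.read x) (Resp.value v) ∨ opExec H i ki kr (Op.write x v') Resp.ok) →
    opExec H j kwi kwr (Op.write x v) Resp.ok →
    kwr < ki →
    ∃ m : ℕ, m < ki ∧
      (H[m]? = some (Event.res j Resp.committed) ∨ H[m]? = some (Event.res j Resp.aborted))

end TM

namespace TM

open Classical

/-- No transaction's events are interleaved with another's. -/
def nonInterleave (S : History) : Prop :=
  ∀ k l m : ℕ, ∀ e1 e2 e3 : Event, k < l → l < m → S[k]? = some e1 → S[l]? = some e2 →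
    S[m]? = some e3 → e3.txn = e1.txn → e2.txn = e1.txn

lemma mem_proj_of_txn {S : History} {e : Event} {i : ℕ} (he : e ∈ S) (ht : e.txn = i) :
    e ∈ proj i S := by
  simp [proj, List.mem_filter, he, ht]

lemma sequential_nonInterleave {S : History} (hs : sequential S) : nonInterleave S := by
  intro k l m e1 e2 e3 hkl hlm h1 h2 h3 h31
  by_contra hne
  have hi : inTxn S e1.txn := by
    intro hnil
    have := mem_proj_of_txn (List.mem_of_getElem? h1) rfl
    simp [hnil] at this
  have hj : inTxn S e2.txn := by
    intro hnil
    have := mem_proj_of_txn (List.mem_of_getElem? h2) rfl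
    simp [hnil] at this
  rcases hs e1.txn e2.txn hi hj (fun h => hne h.symm) with hp | hp
  · obtain ⟨k', l', hkl', _, _, hub, hlb⟩ := hp
    have hm : m ≤ k' := hub m e3 h3 h31
    have hl : l' ≤ l := hlb l e2 h2 rfl
    omega
  · obtain ⟨k', l', hkl', _, _, hub, hlb⟩ := hp
    have hl : l ≤ k' := hub l e2 h2 rfl
    have hk : l' ≤ k := hlb k e1 h1 rfl
    omega

lemma nonInterleave_drop {S : History} (h : nonInterleave S) (n : ℕ) :
    nonInterleave (S.drop n) := by
  intro k l m e1 e2 e3 hkl hlm h1 h2 h3 h31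
  rw [List.getElem?_drop] at h1 h2 h3
  exact h (n+k) (n+l) (n+m) e1 e2 e3 (by omega) (by omega) h1 h2 h3 h31

lemma mem_txnOrder {j : ℕ} : ∀ {L : History}, j ∈ txnOrder L → ∃ e ∈ L, e.txn = j := by
  intro L
  induction L with
  | nil => simp [txnOrder]
  | cons e t ih =>
    intro h
    simp only [txnOrder, List.mem_cons] at h
    rcases h with h | h
    · exact ⟨e, by simp, h.symm⟩
    · obtain ⟨x, hx, hxt⟩ := ih (List.mem_of_mem_filter h)
      exact ⟨x, by simp [hx], hxt⟩

lemma proj_eq_self {a : ℕ} {L : History} (h : ∀ x ∈ L, x.txn = a) : proj a L = L :=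
  List.filter_eq_self.mpr (fun x hx => by simp [h x hx])

lemma proj_eq_nil {a : ℕ} {L : History} (h : ∀ x ∈ L, x.txn ≠ a) : proj a L = [] := by
  simp only [proj, List.filter_eq_nil_iff]
  intro x hx
  simp [h x hx]

lemma proj_append (a : ℕ) (L M : History) : proj a (L ++ M) = proj a L ++ proj a M :=
  List.filter_append _ _

/-- Decomposition of a non-interleaved history. -/
lemma nonInterleave_decomp {e : Event} {t : History} (h : nonInterleave (e :: t)) :
    ∃ A t' : History, t = A ++ t' ∧ (∀ x ∈ A, x.txn = e.txn) ∧
      (∀ x ∈ t', x.txn ≠ e.txn) ∧ nonInterleave t' := by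
  refine ⟨t.takeWhile (fun x => x.txn == e.txn), t.dropWhile (fun x => x.txn == e.txn),
    List.takeWhile_append_dropWhile.symm, ?_, ?_, ?_⟩
  · intro x hx
    simpa using List.mem_takeWhile_imp hx
  · intro x hx
    cases h' : t.dropWhile (fun x => x.txn == e.txn) with
    | nil => rw [h'] at hx; simp at hx
    | cons y r =>
      rw [h'] at hx
      have hy' : y.txn ≠ e.txn := by
        have hh := List.head?_dropWhile_not (fun x => x.txn == e.txn) t
        rw [h'] at hh
        simpa using hh
      have htAt : t = t.takeWhile (fun x => x.txn == e.txn) ++ y :: r := by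
        conv_lhs => rw [← List.takeWhile_append_dropWhile (p := fun x => x.txn == e.txn) (l := t)]
        rw [h']
      set A := t.takeWhile (fun x => x.txn == e.txn) with hA
      rcases List.mem_cons.mp hx with rfl | hx
      · exact hy'
      · intro hxe
        obtain ⟨n, hn⟩ := List.mem_iff_getElem?.mp hx
        have hL : e :: t = (e :: A) ++ (y :: r) := by rw [htAt]; rfl
        have hyidx : (e :: t)[A.length + 1]? = some y := by
          rw [hL, List.getElem?_append_right (by simp)]
          simp
        have hxidx : (e :: t)[A.length + 2 + n]? = some x := by
          rw [hL, List.getElem?_append_right (by simp; omega)]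
          simp only [List.length_cons]
          have h2 : A.length + 2 + n - (A.length + 1) = n + 1 := by omega
          rw [h2]
          simpa using hn
        have heidx : (e :: t)[0]? = some e := by simp
        have hmid := h 0 (A.length + 1) (A.length + 2 + n) e y x (by omega) (by omega)
          heidx hyidx hxidx (by simpa using hxe)
        exact hy' (by simpa using hmid)
  · have hdw : t.dropWhile (fun x => x.txn == e.txn) =
        (e :: t).drop ((t.takeWhile (fun x => x.txn == e.txn)).length + 1) := by
      conv_rhs => rw [show e :: t = (e :: t.takeWhile (fun x => x.txn == e.txn)) ++
        t.dropWhile (fun x => x.txn == e.txn) by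
          simp [List.takeWhile_append_dropWhile]]
      rw [show (t.takeWhile (fun x => x.txn == e.txn)).length + 1 =
        (e :: t.takeWhile (fun x => x.txn == e.txn)).length by simp]
      exact List.drop_left.symm
    rw [hdw]
    exact nonInterleave_drop h _

lemma txnOrder_subset {j : ℕ} : ∀ {L M : History}, j ∈ txnOrder L → True := fun _ => trivial

lemma filter_txnOrder_append {a : ℕ} :
    ∀ (A : History), (∀ x ∈ A, x.txn = a) → ∀ (t' : History), (∀ x ∈ t', x.txn ≠ a) →
      (txnOrder (A ++ t')).filter (fun j => j ≠ a) = txnOrder t' := by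
  intro A
  induction A with
  | nil =>
    intro _ t' ht'
    simp only [List.nil_append]
    apply List.filter_eq_self.mpr
    intro j hj
    obtain ⟨x, hx, hxt⟩ := mem_txnOrder hj
    simp [← hxt, ht' x hx]
  | cons x A' ih =>
    intro hA t' ht'
    have hxa : x.txn = a := hA x (by simp)
    have ihA := ih (fun y hy => hA y (by simp [hy])) t' ht'
    have hid : ∀ L : List ℕ,
        (L.filter (fun j => j ≠ a)).filter (fun j => j ≠ a) = L.filter (fun j => j ≠ a) := by
      intro L
      rw [List.filter_filter]
      apply List.filter_congr
      intro j _
      by_cases hj : j = a <;> simp [hj]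
    simp only [List.cons_append, txnOrder, hxa]
    rw [List.filter_cons, if_neg (by simp)]
    rw [hid]
    exact ihA

lemma flatMap_congr' {α β : Type} {l : List α} {f g : α → List β}
    (h : ∀ a ∈ l, f a = g a) : l.flatMap f = l.flatMap g := by
  induction l with
  | nil => rfl
  | cons x t ih =>
    simp only [List.flatMap_cons, h x (by simp), ih (fun a ha => h a (by simp [ha]))]

/-- Key lemma: for a non-interleaved history, the concatenation of per-transaction
projections in order of first occurrence, restricted to a set of transactions,
equals the restriction of the history to that set. -/
lemma flatMap_txnOrder_eq_restrict (pb : ℕ → Prop) :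
    ∀ (n : ℕ) (S : History), S.length ≤ n → nonInterleave S →
      (txnOrder S).flatMap (fun j => if pb j then proj j S else []) =
        restrictTxns S {j | pb j} := by
  intro n
  induction n with
  | zero =>
    intro S hS _
    have : S = [] := List.length_eq_zero_iff.mp (Nat.le_zero.mp hS)
    subst this
    simp [txnOrder, restrictTxns]
  | succ n ih =>
    intro S hS hni
    cases S with
    | nil => simp [txnOrder, restrictTxns]
    | cons e t =>
      obtain ⟨A, t', rfl, hA, ht', hni'⟩ := nonInterleave_decomp hni
      set a := e.txn with ha
      have hAall : ∀ x ∈ e :: A, x.txn = a := by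
        intro x hx
        rcases List.mem_cons.mp hx with rfl | hx
        · rfl
        · exact hA x hx
      have hprojA : proj a (e :: (A ++ t')) = e :: A := by
        rw [show e :: (A ++ t') = (e :: A) ++ t' from rfl, proj_append,
          proj_eq_self hAall, proj_eq_nil ht', List.append_nil]
      have hprojne : ∀ j, j ≠ a → proj j (e :: (A ++ t')) = proj j t' := by
        intro j hj
        have hne : ∀ x ∈ e :: A, x.txn ≠ j := by
          intro x hx hcontra
          rw [← hcontra] at hj
          exact hj (hAall x hx)
        rw [show e :: (A ++ t') = (e :: A) ++ t' from rfl, proj_append,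
          proj_eq_nil hne, List.nil_append]
      have hto : txnOrder (e :: (A ++ t')) = a :: txnOrder t' := by
        simp only [txnOrder, ← ha]
        rw [filter_txnOrder_append A hA t' ht']
      rw [hto, List.flatMap_cons, hprojA]
      have hrec : (txnOrder t').flatMap
          (fun j => if pb j then proj j (e :: (A ++ t')) else []) =
          restrictTxns t' {j | pb j} := by
        rw [flatMap_congr' (g := fun j => if pb j then proj j t' else []) ?_]
        · exact ih t' (by simp at hS ⊢; omega) hni'
        · intro j hj
          obtain ⟨x, hx, hxt⟩ := mem_txnOrder hj
          rw [hprojne j (by rw [← hxt]; exact ht' x hx)]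
      rw [hrec]
      simp only [restrictTxns]
      rw [show e :: (A ++ t') = (e :: A) ++ t' from rfl, List.filter_append]
      congr 1
      by_cases hpa : pb a
      · rw [if_pos hpa]
        refine (List.filter_eq_self.mpr ?_).symm
        intro x hx
        simp [hAall x hx, hpa]
      · rw [if_neg hpa]
        symm
        rw [List.filter_eq_nil_iff]
        intro x hx
        simp [hAall x hx, hpa]

/-- Every opaque history is last-use opaque: for every
prefix-closed `E` and every `H ∈ E`, if `H` is opaque then `H` is last-use
opaque w.r.t. `E`. -/
theorem opaque_implies_lastUse_opaque
    (E : Set History) (hE : prefixClosed E) (H : History) (hH : H ∈ E)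
    (hop : isOpaque H) : lastUseOpaque E H := by
  intro P hP
  obtain ⟨C, S, hC, hseq, hequiv, hrt, hlegal⟩ := hop P hP
  refine ⟨C, S, hC, hseq, hequiv, hrt, fun i hi _ => hlegal i hi, fun i hi _ => ?_⟩
  refine ⟨fun _ => False, ?_⟩
  have hbuild : buildLUVis E P S i (fun _ => False) =
      (txnOrder S).flatMap
        (fun j => if j = i ∨ (committed S j ∧ rtPrec S j i) then proj j S else []) := by
    unfold buildLUVis
    apply flatMap_congr'
    intro j _
    by_cases h : j = i ∨ committed S j ∧ rtPrec S j i
    · simp [h]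
    · simp [h]
  have hb2 := flatMap_txnOrder_eq_restrict
    (fun j => j = i ∨ (committed S j ∧ rtPrec S j i)) S.length S le_rfl
    (sequential_nonInterleave hseq)
  have hb2' : (txnOrder S).flatMap
      (fun j => @ite (List Event) (j = i ∨ (committed S j ∧ rtPrec S j i))
        (Classical.propDecidable _) (proj j S) []) = Vis S i := hb2
  rw [hbuild]
  rw [flatMap_congr' (g := fun j => @ite (List Event)
      (j = i ∨ (committed S j ∧ rtPrec S j i)) (Classical.propDecidable _) (proj j S) [])
    (by intro j _; by_cases h : j = i ∨ (committed S j ∧ rtPrec S j i) <;> simp [h])]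
  rw [hb2']
  exact hlegal i hi

end TM
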